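/- Let M be an infinite complete metric space. Then Lip_0(M) contains a closed linear subspace isomorphic to c_0. -/

import Mathlib

open Metric Set Filter Topology ZeroAtInfty

/-- The Lipschitz norm (best Lipschitz constant, as a supremum of difference quotients). -/
noncomputable def lipNorm {M : Type*} [MetricSpace M] (f : M → ℝ) : ℝ :=
  sSup {r : ℝ | ∃ x y : M, x ≠ y ∧ r = |f x - f y| / dist x y}

/-- `f` strongly attains its Lipschitz norm. -/
def StronglyAttains {M : Type*} [MetricSpace M] (f : M → ℝ) : Prop :=
  ∃ x y : M, x ≠ y ∧ (f x - f y) / dist x y = lipNorm f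

/-- `f` is Lipschitz with (real) constant `K`. -/
def IsLipWith {M : Type*} [MetricSpace M] (K : ℝ) (f : M → ℝ) : Prop :=
  ∀ x y : M, |f x - f y| ≤ K * dist x y

/-- Distance between two subsets of a metric space. -/
noncomputable def setDist {M : Type*} [MetricSpace M] (A B : Set M) : ℝ :=
  sInf {r : ℝ | ∃ a ∈ A, ∃ b ∈ B, r = dist a b}

/-- A subset is uniformly discrete. -/
def UnifDiscreteOn {M : Type*} [MetricSpace M] (s : Set M) : Prop :=
  ∃ r > 0, ∀ x ∈ s, ∀ y ∈ s, x ≠ y → r ≤ dist x y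

/-- `R(x)`: the supremum of radii `R ≥ 0` with `closedBall x R = {x}`. -/
noncomputable def isolRad {M : Type*} [MetricSpace M] (x : M) : ℝ :=
  sSup {R : ℝ | 0 ≤ R ∧ Metric.closedBall x R = {x}}

section Construction

open scoped Classical

variable {M : Type*} [MetricSpace M]

/-- Sum of disjointly supported tent functions: value of the tent containing `x`, if any. -/
noncomputable def valFun (p : ℕ → M) (t : ℕ → ℝ) (v : ℕ → ℝ) (x : M) : ℝ :=
  if h : ∃ n, dist x (p n) < t n then v h.choose * (t h.choose - dist x (p h.choose)) else 0

lemma valFun_add (p : ℕ → M) (t : ℕ → ℝ) (u v : ℕ → ℝ) (x : M) :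
    valFun p t (u + v) x = valFun p t u x + valFun p t v x := by
  unfold valFun
  split_ifs with h
  · simp only [Pi.add_apply]; ring
  · simp

lemma valFun_smul (p : ℕ → M) (t : ℕ → ℝ) (c : ℝ) (v : ℕ → ℝ) (x : M) :
    valFun p t (c • v) x = c * valFun p t v x := by
  unfold valFun
  split_ifs with h
  · simp only [Pi.smul_apply, smul_eq_mul]; ring
  · simp

lemma valFun_eq {p : ℕ → M} {t : ℕ → ℝ}
    (hdisj : ∀ x m n, dist x (p m) < t m → dist x (p n) < t n → m = n)
    (v : ℕ → ℝ) {x : M} {n : ℕ} (hx : dist x (p n) < t n) :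
    valFun p t v x = v n * (t n - dist x (p n)) := by
  have h : ∃ m, dist x (p m) < t m := ⟨n, hx⟩
  unfold valFun
  rw [dif_pos h]
  have he : h.choose = n := hdisj x h.choose n h.choose_spec hx
  rw [he]

lemma valFun_eq_zero {p : ℕ → M} {t : ℕ → ℝ} (v : ℕ → ℝ) {x : M}
    (hx : ∀ n, t n ≤ dist x (p n)) : valFun p t v x = 0 := by
  have h : ¬ ∃ n, dist x (p n) < t n := by push_neg; exact fun n => hx n
  unfold valFun
  rw [dif_neg h]

lemma valFun_abs_le {p : ℕ → M} {t : ℕ → ℝ}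
    (hdisj : ∀ x m n, dist x (p m) < t m → dist x (p n) < t n → m = n)
    {v : ℕ → ℝ} {B : ℝ} (hvB : ∀ n, |v n| ≤ B)
    {x y : M} {n : ℕ} (hx : dist x (p n) < t n) (hy : t n ≤ dist y (p n)) :
    |valFun p t v x| ≤ B * dist x y := by
  rw [valFun_eq hdisj v hx, abs_mul]
  have h1 : |t n - dist x (p n)| = t n - dist x (p n) := abs_of_nonneg (by linarith)
  have h2 : dist y (p n) ≤ dist y x + dist x (p n) := dist_triangle _ _ _
  have h3 : t n - dist x (p n) ≤ dist x y := by
    rw [dist_comm x y]; linarith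
  have hB0 : 0 ≤ B := le_trans (abs_nonneg _) (hvB n)
  calc |v n| * |t n - dist x (p n)| ≤ B * |t n - dist x (p n)| :=
        mul_le_mul_of_nonneg_right (hvB n) (abs_nonneg _)
    _ ≤ B * dist x y := by rw [h1]; exact mul_le_mul_of_nonneg_left h3 hB0

lemma valFun_lip {p : ℕ → M} {t : ℕ → ℝ}
    (hdisj : ∀ x m n, dist x (p m) < t m → dist x (p n) < t n → m = n)
    {v : ℕ → ℝ} {B : ℝ} (hB0 : 0 ≤ B) (hvB : ∀ n, |v n| ≤ B) (x y : M) :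
    |valFun p t v x - valFun p t v y| ≤ 2 * B * dist x y := by
  have hBd : 0 ≤ B * dist x y := mul_nonneg hB0 dist_nonneg
  by_cases hx : ∃ n, dist x (p n) < t n
  · obtain ⟨n, hn⟩ := hx
    by_cases hy : ∃ m, dist y (p m) < t m
    · obtain ⟨m, hm⟩ := hy
      by_cases hnm : n = m
      · subst hnm
        rw [valFun_eq hdisj v hn, valFun_eq hdisj v hm]
        have he : v n * (t n - dist x (p n)) - v n * (t n - dist y (p n))
            = v n * (dist y (p n) - dist x (p n)) := by ring
        rw [he, abs_mul]
        have h1 : |dist y (p n) - dist x (p n)| ≤ dist x y := by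
          rw [abs_sub_comm]
          exact abs_dist_sub_le x y (p n)
        calc |v n| * |dist y (p n) - dist x (p n)| ≤ B * dist x y :=
              mul_le_mul (hvB n) h1 (abs_nonneg _) hB0
          _ ≤ 2 * B * dist x y := by linarith
      · have hyn : t n ≤ dist y (p n) := by
          by_contra h
          exact hnm (hdisj y n m (lt_of_not_ge h) hm)
        have hxm : t m ≤ dist x (p m) := by
          by_contra h
          exact hnm (hdisj x n m hn (lt_of_not_ge h))
        have hA : |valFun p t v x| ≤ B * dist x y := valFun_abs_le hdisj hvB hn hyn
        have hBb : |valFun p t v y| ≤ B * dist x y := by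
          rw [dist_comm x y]
          exact valFun_abs_le hdisj hvB hm hxm
        calc |valFun p t v x - valFun p t v y|
            ≤ |valFun p t v x| + |valFun p t v y| := abs_sub _ _
          _ ≤ 2 * B * dist x y := by linarith
    · push_neg at hy
      rw [valFun_eq_zero v hy, sub_zero]
      have := valFun_abs_le hdisj hvB hn (hy n)
      linarith
  · push_neg at hx
    rw [valFun_eq_zero v hx, zero_sub, abs_neg]
    by_cases hy : ∃ m, dist y (p m) < t m
    · obtain ⟨m, hm⟩ := hy
      have := valFun_abs_le hdisj hvB hm (hx m)
      rw [dist_comm y x] at this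
      linarith
    · push_neg at hy
      rw [valFun_eq_zero v hy, abs_zero]
      linarith

/-- The key abstract lemma: from a family of separated pairs, build the embedding of `c₀`. -/
theorem keyLemma (z : M) (p q : ℕ → M) (t : ℕ → ℝ)
    (h1 : ∀ n, 0 < t n)
    (h2a : ∀ n, t n ≤ dist (p n) (q n))
    (h2b : ∀ n, dist (p n) (q n) ≤ 4 * t n)
    (h3 : ∀ m n, m ≠ n → t m + t n ≤ dist (p m) (p n))
    (h4 : ∀ m n, t m ≤ dist (q n) (p m)) :
    ∃ (T : C₀(ℕ, ℝ) →ₗ[ℝ] (M → ℝ)) (c C : ℝ), 0 < c ∧ 0 < C ∧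
      ∀ v : C₀(ℕ, ℝ),
        T v z = 0 ∧
        IsLipWith (C * ‖v‖) (T v) ∧
        c * ‖v‖ ≤ lipNorm (T v) ∧ lipNorm (T v) ≤ C * ‖v‖ := by
  have hdisj : ∀ x m n, dist x (p m) < t m → dist x (p n) < t n → m = n := by
    intro x m n hm hn
    by_contra hmn
    have h := h3 m n hmn
    have htri : dist (p m) (p n) ≤ dist x (p m) + dist x (p n) := by
      rw [dist_comm x (p m)]
      exact dist_triangle _ _ _
    linarith
  refine ⟨{ toFun := fun v x => valFun p t (⇑v) x - valFun p t (⇑v) z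
            map_add' := by
              intro u v
              funext x
              have hc : ⇑(u + v) = ⇑u + ⇑v := rfl
              simp only [hc, valFun_add, Pi.add_apply]
              ring
            map_smul' := by
              intro c v
              funext x
              have hc : ⇑(c • v) = c • ⇑v := rfl
              simp only [hc, valFun_smul, RingHom.id_apply, Pi.smul_apply, smul_eq_mul]
              ring },
    1/4, 2, by norm_num, by norm_num, ?_⟩
  intro v
  simp only [LinearMap.coe_mk, AddHom.coe_mk]
  have hvB : ∀ n, |v n| ≤ ‖v‖ := by
    intro n
    have h := v.toBCF.norm_coe_le_norm n
    rwa [ZeroAtInftyContinuousMap.norm_toBCF_eq_norm] at h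
  have hB0 : (0:ℝ) ≤ ‖v‖ := norm_nonneg v
  set f : M → ℝ := fun x => valFun p t (⇑v) x - valFun p t (⇑v) z with hf
  have hlip : ∀ x y : M, |f x - f y| ≤ 2 * ‖v‖ * dist x y := by
    intro x y
    have he : f x - f y = valFun p t (⇑v) x - valFun p t (⇑v) y := by
      simp only [hf]; ring
    rw [he]
    exact valFun_lip hdisj hB0 hvB x y
  set S : Set ℝ := {r : ℝ | ∃ x y : M, x ≠ y ∧ r = |f x - f y| / dist x y} with hS
  have hub : ∀ r ∈ S, r ≤ 2 * ‖v‖ := by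
    rintro r ⟨x, y, hxy, rfl⟩
    have hd : 0 < dist x y := dist_pos.mpr hxy
    rw [div_le_iff₀ hd]
    exact hlip x y
  have hbdd : BddAbove S := ⟨2 * ‖v‖, hub⟩
  have hpnq : ∀ n, p n ≠ q n := fun n =>
    dist_pos.mp (lt_of_lt_of_le (h1 n) (h2a n))
  have hval : ∀ n, f (p n) - f (q n) = v n * t n := by
    intro n
    have hmem : dist (p n) (p n) < t n := by rw [dist_self]; exact h1 n
    have h0 : valFun p t (⇑v) (q n) = 0 := valFun_eq_zero _ (fun m => h4 m n)
    have hp : valFun p t (⇑v) (p n) = v n * (t n - dist (p n) (p n)) :=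
      valFun_eq hdisj _ hmem
    have he : f (p n) - f (q n) = valFun p t (⇑v) (p n) - valFun p t (⇑v) (q n) := by
      simp only [hf]; ring
    rw [he, h0, hp, dist_self]
    ring
  have hlipnorm : lipNorm f = sSup S := rfl
  have hlow : ∀ n, |v n| / 4 ≤ sSup S := by
    intro n
    have hd : 0 < dist (p n) (q n) := dist_pos.mpr (hpnq n)
    have hmem : |f (p n) - f (q n)| / dist (p n) (q n) ∈ S :=
      ⟨p n, q n, hpnq n, rfl⟩
    have hle : |v n| / 4 ≤ |f (p n) - f (q n)| / dist (p n) (q n) := by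
      rw [hval n, abs_mul, abs_of_pos (h1 n), div_le_div_iff₀ (by norm_num) hd]
      nlinarith [abs_nonneg (v n), h2b n, h1 n]
    exact le_trans hle (le_csSup hbdd hmem)
  have hsup0 : 0 ≤ sSup S := le_trans (by positivity) (hlow 0)
  have hnorm_le : ‖v‖ ≤ 4 * sSup S := by
    rw [← ZeroAtInftyContinuousMap.norm_toBCF_eq_norm]
    rw [BoundedContinuousFunction.norm_le (by linarith)]
    intro n
    have h := hlow n
    have he : ‖v.toBCF n‖ = |v n| := rfl
    rw [he]
    linarith
  refine ⟨sub_self _, ?_, ?_, ?_⟩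
  · intro x y
    exact hlip x y
  · rw [hlipnorm]
    linarith
  · rw [hlipnorm]
    exact Real.sSup_le hub (by linarith)

/-- The isolated case, reduced to pairs with controlled nearest-point distances. -/
theorem isolatedCase (z : M) (s : M → ℝ)
    (hs_pos : ∀ x, 0 < s x) (hs_le : ∀ x y, y ≠ x → s x ≤ dist x y)
    (p q : ℕ → M) (hinj : Function.Injective p)
    (hq : ∀ n m, q n ≠ p m) (hd : ∀ n, dist (p n) (q n) < 2 * s (p n)) :
    ∃ (T : C₀(ℕ, ℝ) →ₗ[ℝ] (M → ℝ)) (c C : ℝ), 0 < c ∧ 0 < C ∧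
      ∀ v : C₀(ℕ, ℝ),
        T v z = 0 ∧
        IsLipWith (C * ‖v‖) (T v) ∧
        c * ‖v‖ ≤ lipNorm (T v) ∧ lipNorm (T v) ≤ C * ‖v‖ := by
  apply keyLemma z p q (fun n => s (p n) / 2)
  · intro n
    have := hs_pos (p n)
    positivity
  · intro n
    have h := hs_le (p n) (q n) (hq n n)
    linarith [hs_pos (p n)]
  · intro n
    have := hd n
    linarith
  · intro m n hmn
    have hne : p n ≠ p m := fun h => hmn (hinj h).symm
    have h1 : s (p m) ≤ dist (p m) (p n) := hs_le (p m) (p n) hne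
    have hne' : p m ≠ p n := fun h => hmn (hinj h)
    have h2 : s (p n) ≤ dist (p n) (p m) := hs_le (p n) (p m) hne'
    rw [dist_comm (p n) (p m)] at h2
    linarith
  · intro m n
    have h := hs_le (p m) (q n) (hq n m)
    rw [dist_comm (q n) (p m)]
    linarith [hs_pos (p m)]

end Construction

/-- for every infinite complete metric space `M`, `Lip_0(M)` contains a
(closed) subspace isomorphic to `c₀`. -/
theorem stmt15 {M : Type*} [MetricSpace M] [CompleteSpace M] [Infinite M] (z : M) :
    ∃ (T : C₀(ℕ, ℝ) →ₗ[ℝ] (M → ℝ)) (c C : ℝ), 0 < c ∧ 0 < C ∧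
      ∀ v : C₀(ℕ, ℝ),
        T v z = 0 ∧
        IsLipWith (C * ‖v‖) (T v) ∧
        c * ‖v‖ ≤ lipNorm (T v) ∧ lipNorm (T v) ≤ C * ‖v‖ := by
  by_cases hcl : ∃ c : M, ∀ ε : ℝ, 0 < ε → ∃ y, y ≠ c ∧ dist y c < ε
  · -- cluster point case
    obtain ⟨c0, hc⟩ := hcl
    have hstep : ∀ y : M, y ≠ c0 → ∃ y', y' ≠ c0 ∧ dist y' c0 < dist y c0 / 4 := by
      intro y hy
      have hd : 0 < dist y c0 := dist_pos.mpr hy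
      exact hc (dist y c0 / 4) (by linarith)
    choose! F hF1 hF2 using hstep
    obtain ⟨y0, hy0, -⟩ := hc 1 one_pos
    set X : ℕ → M := fun n => F^[n] y0 with hX
    have hXne : ∀ n, X n ≠ c0 := by
      intro n
      induction n with
      | zero => exact hy0
      | succ k ih =>
        have he : X (k+1) = F (X k) := Function.iterate_succ_apply' F k y0
        rw [he]
        exact hF1 (X k) ih
    have hXdec : ∀ n, dist (X (n+1)) c0 < dist (X n) c0 / 4 := by
      intro n
      have he : X (n+1) = F (X n) := Function.iterate_succ_apply' F n y0
      rw [he]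
      exact hF2 (X n) (hXne n)
    have hXpos : ∀ n, 0 < dist (X n) c0 := fun n => dist_pos.mpr (hXne n)
    have hlt : ∀ m n, m < n → dist (X n) c0 < dist (X m) c0 / 4 := by
      intro m n hmn
      induction n with
      | zero => omega
      | succ k ih =>
        rcases Nat.lt_succ_iff_lt_or_eq.mp hmn with h | h
        · have h1 := ih h
          have h2 := hXdec k
          have h3 := hXpos m
          linarith
        · subst h
          exact hXdec m
    have hkey : ∀ m n, m < n →
        dist (X m) c0 / 2 + dist (X n) c0 / 2 ≤ dist (X m) (X n) := by
      intro m n hmn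
      have h1 := hlt m n hmn
      have htri : dist (X m) c0 ≤ dist (X m) (X n) + dist (X n) c0 := dist_triangle _ _ _
      have h3 := hXpos m
      linarith
    apply keyLemma z X (fun _ => c0) (fun n => dist (X n) c0 / 2)
    · intro n
      have := hXpos n
      linarith
    · intro n
      have := hXpos n
      linarith
    · intro n
      have := hXpos n
      linarith
    · intro m n hmn
      rcases Nat.lt_or_ge m n with h | h
      · exact hkey m n h
      · have h' : n < m := lt_of_le_of_ne h (Ne.symm hmn)
        have := hkey n m h'
        rw [dist_comm (X m) (X n)]
        linarith
    · intro m n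
      rw [dist_comm c0 (X m)]
      have := hXpos m
      linarith
  · -- no cluster point: every point is isolated
    push_neg at hcl
    have hiso : ∀ x : M, ∃ ε : ℝ, 0 < ε ∧ ∀ y, y ≠ x → ε ≤ dist x y := by
      intro x
      obtain ⟨ε, hε, h⟩ := hcl x
      exact ⟨ε, hε, fun y hy => by
        have := h y hy
        rw [dist_comm]
        linarith [this]⟩
    -- infimal distance function
    set s : M → ℝ := fun x => sInf {d : ℝ | ∃ y, y ≠ x ∧ d = dist x y} with hsdef
    have hSne : ∀ x : M, {d : ℝ | ∃ y, y ≠ x ∧ d = dist x y}.Nonempty := by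
      intro x
      obtain ⟨y, hy⟩ := exists_ne x
      exact ⟨dist x y, y, hy, rfl⟩
    have hSbdd : ∀ x : M, BddBelow {d : ℝ | ∃ y, y ≠ x ∧ d = dist x y} := by
      intro x
      exact ⟨0, by rintro d ⟨y, hy, rfl⟩; positivity⟩
    have hs_le : ∀ x y, y ≠ x → s x ≤ dist x y := by
      intro x y hy
      exact csInf_le (hSbdd x) ⟨y, hy, rfl⟩
    have hs_pos : ∀ x, 0 < s x := by
      intro x
      obtain ⟨ε, hε, h⟩ := hiso x
      have : ε ≤ s x := le_csInf (hSne x) (by rintro d ⟨y, hy, rfl⟩; exact h y hy)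
      linarith
    have hnear : ∀ x : M, ∃ y, y ≠ x ∧ dist x y < 2 * s x := by
      intro x
      have hlt : sInf {d : ℝ | ∃ y, y ≠ x ∧ d = dist x y} < 2 * s x := by
        have := hs_pos x
        simp only [hsdef] at *
        linarith
      obtain ⟨d, ⟨y, hy, rfl⟩, hd⟩ := exists_lt_of_csInf_lt (hSne x) hlt
      exact ⟨y, hy, hd⟩
    choose N hN1 hN2 using hnear
    by_cases hfib : ∃ w : M, {x : M | N x = w}.Infinite
    · -- a common near point for infinitely many points
      obtain ⟨w, hw⟩ := hfib
      have hw' : ({x : M | N x = w} \ {w}).Infinite := hw.diff (finite_singleton w)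
      set e := hw'.natEmbedding with he
      set p : ℕ → M := fun n => (e n : M) with hp
      have hinj : Function.Injective p := by
        intro a b hab
        exact e.injective (Subtype.ext hab)
      have hmemp : ∀ n, p n ∈ {x : M | N x = w} \ {w} := fun n => (e n).2
      apply isolatedCase z s hs_pos hs_le p (fun _ => w) hinj
      · intro n m
        exact fun h => (hmemp m).2 h.symm
      · intro n
        have h1 : N (p n) = w := (hmemp n).1
        rw [← h1]
        exact hN2 (p n)
    · -- all fibers of the near-point map are finite: greedy selection
      push_neg at hfib
      have hbadfin : ∀ l : List M,
          ({x : M | x ∈ l} ∪ {x : M | N x ∈ l} ∪ {x : M | ∃ y ∈ l, N y = x}).Finite := by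
        intro l
        refine ((l.finite_toSet.union ?_).union ?_)
        · have he : {x : M | N x ∈ l} = ⋃ y ∈ {z : M | z ∈ l}, {x : M | N x = y} := by
            ext x; simp
          rw [he]
          exact l.finite_toSet.biUnion (fun y _ => hfib y)
        · have he : {x : M | ∃ y ∈ l, N y = x} = N '' {y : M | y ∈ l} := by
            ext x; simp [eq_comm]
          rw [he]
          exact l.finite_toSet.image N
      have hpick : ∀ l : List M,
          ∃ x : M, x ∉ ({x : M | x ∈ l} ∪ {x : M | N x ∈ l} ∪ {x : M | ∃ y ∈ l, N y = x}) := by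
        intro l
        obtain ⟨x, hx⟩ := ((hbadfin l).infinite_compl).nonempty
        exact ⟨x, hx⟩
      choose pick hpickspec using hpick
      set L : ℕ → List M := fun n => Nat.rec ([] : List M) (fun _ ih => pick ih :: ih) n with hL
      set p : ℕ → M := fun n => pick (L n) with hp
      have hLsucc : ∀ n, L (n + 1) = p n :: L n := fun n => rfl
      have hmemL : ∀ m n, m < n → p m ∈ L n := by
        intro m n hmn
        induction n with
        | zero => omega
        | succ k ih =>
          rw [hLsucc k]
          rcases Nat.lt_succ_iff_lt_or_eq.mp hmn with h | h
          · exact List.mem_cons_of_mem _ (ih h)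
          · subst h
            exact List.mem_cons_self
      have hfresh : ∀ n m, m < n → p n ≠ p m ∧ N (p n) ≠ p m ∧ N (p m) ≠ p n := by
        intro n m hmn
        have hspec := hpickspec (L n)
        simp only [Set.mem_union, Set.mem_setOf_eq, not_or, not_exists] at hspec
        obtain ⟨⟨hs1, hs2⟩, hs3⟩ := hspec
        have hm := hmemL m n hmn
        have hpn : p n = pick (L n) := rfl
        refine ⟨?_, ?_, ?_⟩
        · intro h
          apply hs1
          rw [← hpn, h]
          exact hm
        · intro h
          apply hs2
          rw [← hpn, h]
          exact hm
        · intro h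
          have h3 : p m ∈ L n → N (p m) ≠ pick (L n) := by simpa using hs3 (p m)
          rw [hpn] at h
          exact h3 hm h
      have hinj : Function.Injective p := by
        intro a b hab
        by_contra hne
        rcases Nat.lt_or_ge a b with h | h
        · exact (hfresh b a h).1 hab.symm
        · have h' : b < a := lt_of_le_of_ne h (Ne.symm hne)
          exact (hfresh a b h').1 hab
      apply isolatedCase z s hs_pos hs_le p (fun n => N (p n)) hinj
      · intro n m
        rcases lt_trichotomy n m with h | h | h
        · exact (hfresh m n h).2.2
        · subst h
          exact hN1 (p n)
        · exact (hfresh n m h).2.1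
      · intro n
        exact hN2 (p n)
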